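/- Let H be a proper handle of a matroid M on E with |H| ≥ 2, H independent, and H containing no coloops of M. Then for any h ∈ H, the set H ∖ {h} is a handle of the contraction matroid M / h, is independent in M / h, and contains no coloops of M / h. -/
import Mathlib


open Classical

/-- A matroid on a finite ground set `E`, presented by its nonempty collection of bases,
which satisfies the basis exchange axiom. -/
structure FinMatroid (α : Type*) [DecidableEq α] where
  E : Finset α
  bases : Finset (Finset α)
  bases_nonempty : bases.Nonempty
  subset_ground : ∀ B ∈ bases, B ⊆ E
  exchange : ∀ B ∈ bases, ∀ B' ∈ bases, ∀ e ∈ B \ B',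
      ∃ f ∈ B' \ B, insert f (B.erase e) ∈ bases

variable {α : Type*} [DecidableEq α]

/-- Independence with respect to a collection `𝓑` of bases: being contained in a basis. -/
def Indep (𝓑 : Finset (Finset α)) (I : Finset α) : Prop := ∃ B ∈ 𝓑, I ⊆ B

/-- The rank of a collection of bases: the (common) cardinality of the bases. -/
def dataRank (𝓑 : Finset (Finset α)) : ℕ := 𝓑.sup Finset.card

/-- The rank of a subset `A`: the maximal size of its intersection with a basis. -/
def dataRankOf (𝓑 : Finset (Finset α)) (A : Finset α) : ℕ := 𝓑.sup fun B => (B ∩ A).card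

/-- Circuits: the minimal dependent subsets of the ground set. -/
def IsCircuit (E : Finset α) (𝓑 : Finset (Finset α)) (C : Finset α) : Prop :=
  C ⊆ E ∧ ¬ Indep 𝓑 C ∧ ∀ D ⊂ C, Indep 𝓑 D

/-- A loop: an element lying in no basis. -/
def IsLoop (𝓑 : Finset (Finset α)) (e : α) : Prop := ∀ B ∈ 𝓑, e ∉ B

/-- A coloop: an element lying in every basis. -/
def IsColoop (𝓑 : Finset (Finset α)) (e : α) : Prop := ∀ B ∈ 𝓑, e ∈ B

/-- A handle: a nonempty subset of the ground set which every circuit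
either avoids entirely or contains entirely. -/
def IsHandle (E : Finset α) (𝓑 : Finset (Finset α)) (H : Finset α) : Prop :=
  H.Nonempty ∧ H ⊆ E ∧ ∀ C, IsCircuit E 𝓑 C → Disjoint H C ∨ H ⊆ C

/-- The rank of a matroid: the common cardinality of its bases. -/
def FinMatroid.rank (M : FinMatroid α) : ℕ := dataRank M.bases

/-- The bases of the deletion matroid `M \ H`: the maximal `M`-independent
subsets of `E ∖ H`. -/
noncomputable def deleteBases (M : FinMatroid α) (H : Finset α) : Finset (Finset α) :=
  ((M.E \ H).powerset.filter fun I => Indep M.bases I).filter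
    fun I => ∀ J ∈ (M.E \ H).powerset, Indep M.bases J → I ⊆ J → I = J

/-- The bases of the contraction matroid `M / H` (for `H` independent):
the sets `B \ H` where `B` is a basis of `M` containing `H`. -/
noncomputable def contractBases (M : FinMatroid α) (H : Finset α) : Finset (Finset α) :=
  (M.bases.filter fun B => H ⊆ B).image fun B => B \ H

/-- `𝓑N` is a quotient of `𝓑M` (on the common ground set `E`):
every circuit of `M` is a union of circuits of `N`. -/
def IsQuotientData (E : Finset α) (𝓑N 𝓑M : Finset (Finset α)) : Prop :=
  ∀ C, IsCircuit E 𝓑M C →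
    ∃ 𝒞 : Finset (Finset α), (∀ D ∈ 𝒞, IsCircuit E 𝓑N D) ∧ C = 𝒞.sup id

/-- The bases of the truncation `τ(M)`: the independent sets of `M`
of cardinality exactly `rank M - 1`. -/
noncomputable def truncBases (M : FinMatroid α) : Finset (Finset α) :=
  M.E.powerset.filter fun I => Indep M.bases I ∧ I.card = M.rank - 1

/-- The matroid basis polynomial `Ψ = ∑_{B basis} x^B`. -/
noncomputable def basisPoly (K : Type*) [CommRing K] (𝓑 : Finset (Finset α)) :
    MvPolynomial α K :=
  ∑ B ∈ 𝓑, ∏ e ∈ B, MvPolynomial.X e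

/-- The multivariate Tutte polynomial
`Z = ∑_{A ⊆ E} p^(rank - rank A) x^A`, an element of `K[p][x_e : e ∈ E]`. -/
noncomputable def tutte (K : Type*) [CommRing K] (E : Finset α) (𝓑 : Finset (Finset α)) :
    MvPolynomial α (Polynomial K) :=
  ∑ A ∈ E.powerset,
    MvPolynomial.C (Polynomial.X ^ (dataRank 𝓑 - dataRankOf 𝓑 A)) * ∏ a ∈ A, MvPolynomial.X a

/-- A polynomial with coefficient function `c` supported on the bases `𝓑`:
`∑_{B ∈ 𝓑} c_B x^B`. -/
noncomputable def msp (K : Type*) [CommRing K] (𝓑 : Finset (Finset α)) (c : Finset α → K) :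
    MvPolynomial α K :=
  ∑ B ∈ 𝓑, MvPolynomial.C (c B) * ∏ e ∈ B, MvPolynomial.X e


lemma indep_subset {𝓑 : Finset (Finset α)} {I J : Finset α} (hJ : Indep 𝓑 J) (hIJ : I ⊆ J) :
    Indep 𝓑 I := by
  obtain ⟨B, hB, hJB⟩ := hJ; exact ⟨B, hB, hIJ.trans hJB⟩

lemma exists_circuit_subset {E : Finset α} {𝓑 : Finset (Finset α)} :
    ∀ S : Finset α, S ⊆ E → ¬ Indep 𝓑 S → ∃ C ⊆ S, IsCircuit E 𝓑 C := by
  intro S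
  induction S using Finset.strongInduction with
  | _ S ih =>
    intro hSE hS
    by_cases hmin : ∀ D ⊂ S, Indep 𝓑 D
    · exact ⟨S, le_refl _, hSE, hS, hmin⟩
    · push_neg at hmin
      obtain ⟨D, hDS, hD⟩ := hmin
      obtain ⟨C, hCD, hC⟩ := ih D hDS (hDS.subset.trans hSE) hD
      exact ⟨C, hCD.trans hDS.subset, hC⟩

lemma contract_indep_iff {M : FinMatroid α} {h : α} {I : Finset α} (hI : h ∉ I) :
    Indep (contractBases M {h}) I ↔ Indep M.bases (insert h I) := by
  constructor
  · rintro ⟨B', hB', hIB'⟩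
    simp only [contractBases, Finset.mem_image, Finset.mem_filter] at hB'
    obtain ⟨B, ⟨hB, hhB⟩, rfl⟩ := hB'
    refine ⟨B, hB, ?_⟩
    intro x hx
    rcases Finset.mem_insert.1 hx with rfl | hx
    · exact hhB (Finset.mem_singleton_self _)
    · exact (Finset.mem_sdiff.1 (hIB' hx)).1
  · rintro ⟨B, hB, hIB⟩
    refine ⟨B \ {h}, ?_, ?_⟩
    · simp only [contractBases, Finset.mem_image, Finset.mem_filter]
      exact ⟨B, ⟨hB, Finset.singleton_subset_iff.2 (hIB (Finset.mem_insert_self _ _))⟩, rfl⟩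
    · intro x hx
      refine Finset.mem_sdiff.2 ⟨hIB (Finset.mem_insert_of_mem hx), ?_⟩
      simp only [Finset.mem_singleton]
      rintro rfl; exact hI hx

theorem stmt6 {α : Type*} [DecidableEq α] (M : FinMatroid α) (H : Finset α)
    (hH : IsHandle M.E M.bases H) (hprop : H ≠ M.E) (hcard : 2 ≤ H.card)
    (hind : Indep M.bases H) (hco : ∀ h ∈ H, ¬ IsColoop M.bases h)
    (h : α) (hh : h ∈ H) :
    IsHandle (M.E.erase h) (contractBases M {h}) (H.erase h) ∧
    Indep (contractBases M {h}) (H.erase h) ∧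
    ∀ x ∈ H.erase h, ¬ IsColoop (contractBases M {h}) x := by
  obtain ⟨B0, hB0, hHB0⟩ := hind
  have hhB0 : h ∈ B0 := hHB0 hh
  have hHE : H ⊆ M.E := hH.2.1
  have hne : (H.erase h).Nonempty := by
    rw [← Finset.card_pos, Finset.card_erase_of_mem hh]; omega
  have hBmem : B0 \ {h} ∈ contractBases M {h} := by
    simp only [contractBases, Finset.mem_image, Finset.mem_filter]
    exact ⟨B0, ⟨hB0, Finset.singleton_subset_iff.2 hhB0⟩, rfl⟩
  have hindc : Indep (contractBases M {h}) (H.erase h) := by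
    refine ⟨B0 \ {h}, hBmem, ?_⟩
    intro x hx
    rcases Finset.mem_erase.1 hx with ⟨hxh, hxH⟩
    exact Finset.mem_sdiff.2 ⟨hHB0 hxH, by simpa using hxh⟩
  refine ⟨⟨hne, ?_, ?_⟩, hindc, ?_⟩
  · intro x hx
    rcases Finset.mem_erase.1 hx with ⟨hxh, hxH⟩
    exact Finset.mem_erase.2 ⟨hxh, hHE hxH⟩
  · intro C hC
    obtain ⟨hCE, hCdep, hCmin⟩ := hC
    have hhC : h ∉ C := fun hc => (Finset.mem_erase.1 (hCE hc)).1 rfl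
    have hdep : ¬ Indep M.bases (insert h C) := fun hi =>
      hCdep ((contract_indep_iff hhC).2 hi)
    have hsub : insert h C ⊆ M.E := by
      intro x hx
      rcases Finset.mem_insert.1 hx with rfl | hx
      · exact hHE hh
      · exact Finset.mem_of_mem_erase (hCE hx)
    obtain ⟨C', hC'sub, hC'⟩ := exists_circuit_subset _ hsub hdep
    by_cases hhC' : h ∈ C'
    · right
      have hnd : ¬ Disjoint H C' := fun hd => (Finset.disjoint_left.1 hd hh) hhC'
      have hHC' : H ⊆ C' := (hH.2.2 C' hC').resolve_left hnd
      intro x hx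
      rcases Finset.mem_erase.1 hx with ⟨hxh, hxH⟩
      rcases Finset.mem_insert.1 (hC'sub (hHC' hxH)) with rfl | hxC
      · exact absurd rfl hxh
      · exact hxC
    · have hC'C : C' ⊆ C := by
        intro x hx
        rcases Finset.mem_insert.1 (hC'sub hx) with rfl | hxC
        · exact absurd hx hhC'
        · exact hxC
      have hCC : C' = C := by
        by_contra hne'
        have hss : C' ⊂ C := ⟨hC'C, fun hsub' => hne' (Finset.Subset.antisymm hC'C hsub')⟩
        have hi1 := hCmin C' hss
        have hi2 : Indep M.bases (insert h C') := (contract_indep_iff hhC').1 hi1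
        exact hC'.2.1 (indep_subset hi2 (Finset.subset_insert _ _))
      subst hCC
      left
      have hd : Disjoint H C' := by
        rcases hH.2.2 C' hC' with hd | hHC
        · exact hd
        · exact absurd (hHC hh) hhC'
      exact Finset.disjoint_of_subset_left (Finset.erase_subset _ _) hd
  · intro x hx hcol
    rcases Finset.mem_erase.1 hx with ⟨hxh, hxH⟩
    have := hco x hxH
    simp only [IsColoop, not_forall] at this
    obtain ⟨B1, hB1, hxB1⟩ := this
    obtain ⟨B1', hB1', hxB1'⟩ : ∃ B ∈ M.bases, x ∉ B := ⟨B1, hB1, hxB1⟩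
    obtain ⟨f, hf, hB2⟩ := M.exchange B0 hB0 B1' hB1' x (Finset.mem_sdiff.2 ⟨hHB0 hxH, hxB1'⟩)
    rcases Finset.mem_sdiff.1 hf with ⟨hfB1, hfB0⟩
    have hhB2 : h ∈ insert f (B0.erase x) :=
      Finset.mem_insert_of_mem (Finset.mem_erase.2 ⟨fun he => hxh he.symm, hhB0⟩)
    have hmem2 : insert f (B0.erase x) \ {h} ∈ contractBases M {h} := by
      simp only [contractBases, Finset.mem_image, Finset.mem_filter]
      exact ⟨_, ⟨hB2, Finset.singleton_subset_iff.2 hhB2⟩, rfl⟩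
    have hx2 := hcol _ hmem2
    rcases Finset.mem_sdiff.1 hx2 with ⟨hx2', _⟩
    rcases Finset.mem_insert.1 hx2' with rfl | hx2''
    · exact hfB0 (hHB0 hxH)
    · exact (Finset.mem_erase.1 hx2'').1 rfl
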